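/- Let V be a real inner product space and let n ∈ V be a unit vector (⟪n, n⟫ = 1). For every x ∈ V and every integer p ≥ 1, there exist real scalars a and b such that (ι(x) * ι(n))^p * ι(n) = a • ι(n) + b • ι(x − ⟪x, n⟫ • n). In particular, all powers of the Clifford Julia iterate lie in the two-dimensional subspace of V spanned by n and the rejection x − ⟪x, n⟫ • n. -/

import Mathlib

open scoped InnerProductSpace

/-- The quadratic form `Q v = ⟪v, v⟫` on a real inner product space. -/
noncomputable def Qf (V : Type*) [NormedAddCommGroup V] [InnerProductSpace ℝ V] :
    QuadraticForm ℝ V :=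
  LinearMap.BilinMap.toQuadraticMap (innerₗ V)

theorem iterate_in_plane_of_n_and_rejection
    (V : Type*) [NormedAddCommGroup V] [InnerProductSpace ℝ V]
    (n : V) (hn : ⟪n, n⟫_ℝ = 1) (x : V) (p : ℕ) (hp : 1 ≤ p) :
    ∃ a b : ℝ,
      (CliffordAlgebra.ι (Qf V) x * CliffordAlgebra.ι (Qf V) n) ^ p *
          CliffordAlgebra.ι (Qf V) n
        = a • CliffordAlgebra.ι (Qf V) n
          + b • CliffordAlgebra.ι (Qf V) (x - ⟪x, n⟫_ℝ • n) := by
  set ι := CliffordAlgebra.ι (Qf V) with hι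
  set c : ℝ := ⟪x, n⟫_ℝ with hc
  set r : V := x - c • n with hrdef
  have hQ : ∀ v : V, Qf V v = ⟪v, v⟫_ℝ := fun v => rfl
  have hnn : ι n * ι n = 1 := by
    rw [hι, CliffordAlgebra.ι_sq_scalar, hQ, hn, map_one]
  have hrn : ⟪r, n⟫_ℝ = 0 := by
    rw [hrdef, inner_sub_left, real_inner_smul_left, hn]; ring
  have hnr : ⟪n, r⟫_ℝ = 0 := by rw [real_inner_comm]; exact hrn
  have hanti : ι n * ι r = -(ι r * ι n) := by
    have h := CliffordAlgebra.ι_mul_ι_add_swap (Q := Qf V) n r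
    have hpol : QuadraticMap.polar (Qf V) n r = 0 := by
      simp only [QuadraticMap.polar, hQ]
      rw [real_inner_add_add_self, hnr]
      ring
    rw [hpol, map_zero] at h
    rw [hι]
    exact eq_neg_of_add_eq_zero_left h
  have hrr : ι r * ι r = ⟪r, r⟫_ℝ • (1 : CliffordAlgebra (Qf V)) := by
    rw [hι, CliffordAlgebra.ι_sq_scalar, hQ, Algebra.algebraMap_eq_smul_one]
  have hxr : ι x = c • ι n + ι r := by
    rw [hrdef, map_sub, map_smul]; abel
  have hrrn : ι r * (ι r * ι n) = ⟪r, r⟫_ℝ • ι n := by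
    rw [← mul_assoc, hrr, smul_mul_assoc, one_mul]
  have hnrn : ι n * (ι r * ι n) = -ι r := by
    rw [← mul_assoc, hanti, neg_mul, mul_assoc, hnn, mul_one]
  have key2 : ι x * ι n * ι n = c • ι n + ι r := by
    rw [mul_assoc, hnn, mul_one, hxr]
  have key3 : ι x * ι n * ι r = (-⟪r, r⟫_ℝ) • ι n + c • ι r := by
    rw [mul_assoc, hanti, mul_neg, hxr, add_mul, smul_mul_assoc, hnrn, hrrn]
    module
  induction p, hp using Nat.le_induction with
  | base =>
    exact ⟨c, 1, by rw [pow_one, key2, one_smul]⟩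
  | succ p hp ih =>
    obtain ⟨a, b, hab⟩ := ih
    refine ⟨a * c - b * ⟪r, r⟫_ℝ, a + b * c, ?_⟩
    rw [pow_succ', mul_assoc, hab, mul_add, mul_smul_comm, mul_smul_comm, key2, key3]
    module
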